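/- Let S̃_11 ∈ R^{n×n} solve the equation S̃_11 = C Q̂ S̃_11 Q̂^T + ((1−C)C/(d_j+1)²) e_j e_j^T + (1−C) I_n, and let S solve S = C Q S Q^T + (1−C) I_n, where Q̂ = Q − (1/(d_j+1)) e_j [Q]_{j,·}. Then ΔS̃_11 := S̃_11 − S satisfies ΔS̃_11 = C Q̂ ΔS̃_11 Q̂^T + (C/(d_j+1))(e_j z^T + z e_j^T), where z = α e_j − y, y = Q S ([Q]_{j,·})^T, and α = (y_j + 1 − C)/(2(d_j+1)). -/

import Mathlib

open Matrix

lemma my_mul_vecMulVec {m n p : Type*} [Fintype n] (M : Matrix m n ℝ) (a : n → ℝ) (b : p → ℝ) :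
    M * vecMulVec a b = vecMulVec (M *ᵥ a) b := by
  ext i k
  simp [mul_apply, vecMulVec_apply, mulVec, dotProduct, Finset.sum_mul, mul_assoc]

lemma my_vecMulVec_mul {m n p : Type*} [Fintype n] (a : m → ℝ) (b : n → ℝ) (M : Matrix n p ℝ) :
    vecMulVec a b * M = vecMulVec a (b ᵥ* M) := by
  ext i k
  simp [mul_apply, vecMulVec_apply, vecMul, dotProduct, Finset.mul_sum, mul_assoc]

lemma my_transpose_vecMulVec {m n : Type*} (a : m → ℝ) (b : n → ℝ) :
    (vecMulVec a b)ᵀ = vecMulVec b a := by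
  ext i k
  simp [vecMulVec_apply, mul_comm]

/-- rank-two Sylvester equation for the SimRank change when inserting an edge
`(i,j)` from a brand-new node `i` to an existing node `j` of in-degree `d_j`. With
`Q̂ = Q - (1/(d_j+1)) e_j [Q]_{j,·}`, `y = Q S ([Q]_{j,·})ᵀ`, `α = (y_j + 1 - C)/(2(d_j+1))`,
and `z = α e_j - y`, the difference `ΔS̃₁₁ = S̃₁₁ - S` satisfies
`ΔS̃₁₁ = C Q̂ ΔS̃₁₁ Q̂ᵀ + (C/(d_j+1))(e_j zᵀ + z e_jᵀ)`. -/
theorem simrank_new_source_node_rank_two_sylvester {n : ℕ} (C : ℝ)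
    (hC0 : 0 < C) (hC1 : C < 1) (dj : ℕ)
    (Q S St11 Qh : Matrix (Fin n) (Fin n) ℝ) (j : Fin n)
    (hSsym : S.IsSymm)
    (hQh : Qh = Q - ((dj : ℝ) + 1)⁻¹ •
      vecMulVec (Pi.single j 1 : Fin n → ℝ) (fun k => Q j k))
    (hS : S = C • (Q * S * Qᵀ) + (1 - C) • (1 : Matrix (Fin n) (Fin n) ℝ))
    (hSt : St11 = C • (Qh * St11 * Qhᵀ) +
      ((1 - C) * C / ((dj : ℝ) + 1) ^ 2) •
        vecMulVec (Pi.single j 1 : Fin n → ℝ) (Pi.single j 1 : Fin n → ℝ) +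
      (1 - C) • (1 : Matrix (Fin n) (Fin n) ℝ))
    (y : Fin n → ℝ) (hy : y = Q *ᵥ (S *ᵥ (fun k => Q j k)))
    (α : ℝ) (hα : α = (y j + 1 - C) / (2 * ((dj : ℝ) + 1)))
    (z : Fin n → ℝ) (hz : z = α • (Pi.single j 1 : Fin n → ℝ) - y) :
    St11 - S = C • (Qh * (St11 - S) * Qhᵀ) +
      (C / ((dj : ℝ) + 1)) •
        (vecMulVec (Pi.single j 1 : Fin n → ℝ) z +
          vecMulVec z (Pi.single j 1 : Fin n → ℝ)) := by
  set e : Fin n → ℝ := (Pi.single j 1 : Fin n → ℝ) with he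
  set r : Fin n → ℝ := (fun k => Q j k) with hr
  set d : ℝ := ((dj : ℝ) + 1)⁻¹ with hd
  have hdj : ((dj : ℝ) + 1) ≠ 0 := by positivity
  -- key: Qh * S * Qhᵀ expansion
  have hQhT : Qhᵀ = Qᵀ - d • vecMulVec r e := by
    rw [hQh, transpose_sub, transpose_smul, my_transpose_vecMulVec]
  have hrS : r ᵥ* S = S *ᵥ r := by
    conv_rhs => rw [← hSsym.eq]
    rw [mulVec_transpose]
  have hQSr : Q *ᵥ (S *ᵥ r) = y := hy.symm
  have hyj : r ⬝ᵥ (S *ᵥ r) = y j := by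
    rw [hy]; simp [mulVec, dotProduct, hr, mul_comm]
  have hE1 : Q * S * vecMulVec r e = vecMulVec y e := by
    rw [Matrix.mul_assoc, my_mul_vecMulVec, my_mul_vecMulVec, hQSr]
  have hE2 : vecMulVec e r * S * Qᵀ = vecMulVec e y := by
    rw [my_vecMulVec_mul, my_vecMulVec_mul, hrS, vecMul_transpose, hQSr]
  have hE3 : vecMulVec e r * S * vecMulVec r e = (y j) • vecMulVec e e := by
    rw [my_vecMulVec_mul, my_vecMulVec_mul, hrS]
    have : (S *ᵥ r) ᵥ* vecMulVec r e = (y j) • e := by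
      ext k
      simp only [vecMul, vecMulVec_apply, dotProduct, Pi.smul_apply, smul_eq_mul]
      rw [← hyj, dotProduct, Finset.sum_mul]
      exact Finset.sum_congr rfl fun x _ => by ring
    rw [this]
    ext i k
    simp [vecMulVec_apply, mul_comm, mul_assoc, mul_left_comm]
  have key : Qh * S * Qhᵀ = Q * S * Qᵀ
      - d • vecMulVec y e - d • vecMulVec e y + (d * (d * y j)) • vecMulVec e e := by
    rw [hQhT, hQh]
    simp only [Matrix.sub_mul, Matrix.mul_sub, smul_mul_assoc, mul_smul_comm, smul_smul,
      smul_sub]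
    rw [hE1, hE2, hE3]
    module
  have h2α : 2 * α = d * (y j + 1 - C) := by
    rw [hα, hd]; field_simp
  have hzz : vecMulVec e z + vecMulVec z e
      = (d * (y j + 1 - C)) • vecMulVec e e - vecMulVec e y - vecMulVec y e := by
    rw [← h2α, hz]
    ext i k
    simp only [Matrix.add_apply, Matrix.sub_apply, Matrix.smul_apply, vecMulVec_apply, Pi.sub_apply, Pi.smul_apply,
      smul_eq_mul]
    ring
  have hC' : C / ((dj : ℝ) + 1) = C * d := by rw [hd, div_eq_mul_inv]
  have hC2 : (1 - C) * C / ((dj : ℝ) + 1) ^ 2 = (1 - C) * C * (d * d) := by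
    rw [hd, div_eq_mul_inv, ← inv_pow]; ring
  conv_lhs => rw [hSt, hS]
  rw [Matrix.mul_sub Qh, Matrix.sub_mul]
  rw [key, hzz, hC', hC2]
  module
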